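/- Let P = (P_{i,j})_{i,j≥0} be the matrix of the U_5-operator Σ_{i=1}^5 ||_k δ_i on Q_5⟨z⟩ in the monomial basis, where the δ_i are as in the paper. Then P_{i,j} = 0 unless i ≡ j (mod 4). -/

import Mathlib

open PowerSeries

instance : Fact (Nat.Prime 5) := ⟨by norm_num⟩

/-- `H_γ(x,y) = Σ_j y^j (cx+d)^{k-2}((ax+b)/(cx+d))^j`, the generating series of the weight-`k`
action of `γ = (a b; c d)` on `ℚ₅⟨z⟩` in the monomial basis. -/
noncomputable def genSeries (a b c d : ℚ_[5]) (k : ℕ) : PowerSeries (PowerSeries ℚ_[5]) :=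
  PowerSeries.mk fun j =>
    (PowerSeries.C (R := ℚ_[5]) c * PowerSeries.X + PowerSeries.C (R := ℚ_[5]) d) ^ (k - 2) *
      ((PowerSeries.C (R := ℚ_[5]) a * PowerSeries.X + PowerSeries.C (R := ℚ_[5]) b) *
        (PowerSeries.C (R := ℚ_[5]) c * PowerSeries.X + PowerSeries.C (R := ℚ_[5]) d)⁻¹) ^ j

local notation "K" => ℚ_[5]

lemma my_rescale_C (c x : K) : rescale c (C (R := K) x) = C (R := K) x := by
  ext n
  rw [coeff_rescale]
  simp only [coeff_C]
  split_ifs with h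
  · subst h; simp
  · simp

lemma my_rescale_inv (c : K) (f : K⟦X⟧) (h : constantCoeff (R := K) f ≠ 0) :
    rescale c (f⁻¹) = (rescale c f)⁻¹ := by
  have hc : constantCoeff (R := K) (rescale c f) ≠ 0 := by
    rw [← coeff_zero_eq_constantCoeff, coeff_rescale]
    simpa using h
  rw [eq_comm, PowerSeries.inv_eq_iff_mul_eq_one hc, ← map_mul,
    PowerSeries.inv_mul_cancel f h, map_one]

lemma coeff_gen_symm (ν : K) (hν : ν ^ 2 = -1) (a b c d : K) (hd : d ≠ 0) (k j : ℕ) :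
    coeff (R := K⟦X⟧) j (genSeries a (b*ν) (-(c*ν)) d k)
      = C (R := K) (ν ^ j) * rescale (-ν) (coeff (R := K⟦X⟧) j (genSeries a b c d k)) := by
  have hF : constantCoeff (R := K) (C (R := K) c * X + C (R := K) d) ≠ 0 := by
    simpa using hd
  have key : rescale (-ν) (coeff (R := K⟦X⟧) j (genSeries a b c d k))
      = (C (R := K) c * (C (R := K) (-ν) * X) + C (R := K) d) ^ (k-2) *
        ((C (R := K) a * (C (R := K) (-ν) * X) + C (R := K) b) * (C (R := K) c * (C (R := K) (-ν) * X) + C (R := K) d)⁻¹) ^ j := by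
    simp only [genSeries, coeff_mk, map_mul, map_pow, map_add, my_rescale_inv _ _ hF,
      rescale_X, my_rescale_C]
  rw [key]
  simp only [genSeries, coeff_mk]
  have h1 : C (R := K) c * (C (R := K) (-ν) * X) + C (R := K) d = C (R := K) (-(c*ν)) * X + C (R := K) d := by
    have e : (-(c*ν)) = c * -ν := by ring
    rw [e, map_mul, mul_assoc]
  have e1 : ν * (a * -ν) = a := by
    have h : ν * (a * -ν) = -(a * ν^2) := by ring
    rw [h, hν]; ring
  have h2 : C (R := K) a * X + C (R := K) (b*ν) = C (R := K) ν * (C (R := K) a * (C (R := K) (-ν) * X) + C (R := K) b) := by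
    calc C (R := K) a * X + C (R := K) (b*ν)
        = C (R := K) (ν * (a * -ν)) * X + C (R := K) (ν * b) := by rw [e1, mul_comm b ν]
      _ = C (R := K) ν * (C (R := K) a * (C (R := K) (-ν) * X) + C (R := K) b) := by
          rw [map_mul, map_mul, map_mul]; ring
  rw [← h1, h2, mul_assoc (C (R := K) ν), mul_pow]
  rw [map_pow]
  ring

/-- The generating series of the `U₅`-operator `Σ_{i=1}^5 ‖_k δ_i`, where
`δ₁ = diag(-2+ν, -2-ν)` and, with `α = (1+3ν)/2`: `δ₂ = (1-α, α; α-1, α)`,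
`δ₃ = (1-α, -αν; (α-1)ν, α)`, `δ₄ = (1-α, αν; (1-α)ν, α)`, `δ₅ = (1-α, -α; 1-α, α)`. -/
noncomputable def U5Series (ν : ℚ_[5]) (k : ℕ) : PowerSeries (PowerSeries ℚ_[5]) :=
  genSeries (-2 + ν) 0 0 (-2 - ν) k +
  genSeries (1 - (1 + 3*ν)/2) ((1 + 3*ν)/2) ((1 + 3*ν)/2 - 1) ((1 + 3*ν)/2) k +
  genSeries (1 - (1 + 3*ν)/2) (-((1 + 3*ν)/2 * ν)) (((1 + 3*ν)/2 - 1) * ν) ((1 + 3*ν)/2) k +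
  genSeries (1 - (1 + 3*ν)/2) ((1 + 3*ν)/2 * ν) ((1 - (1 + 3*ν)/2) * ν) ((1 + 3*ν)/2) k +
  genSeries (1 - (1 + 3*ν)/2) (-((1 + 3*ν)/2)) (1 - (1 + 3*ν)/2) ((1 + 3*ν)/2) k

lemma coeff_U5_symm (ν : K) (hν : ν ^ 2 = -1) (k j : ℕ) :
    coeff (R := K⟦X⟧) j (U5Series ν k)
      = C (R := K) (ν ^ j) * rescale (-ν) (coeff (R := K⟦X⟧) j (U5Series ν k)) := by
  set α : K := (1 + 3*ν)/2 with hα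
  have hd1 : (-2 - ν : K) ≠ 0 := by
    intro h
    have h2 : ν = -2 := by linear_combination -h
    rw [h2] at hν; norm_num at hν
  have hα0 : α ≠ 0 := by
    intro h
    have h3 : (1 : K) + 3*ν = 0 := by
      have := h; rw [hα] at this; field_simp at this; linear_combination this
    have h9 : (9 : K) * ν^2 = 1 := by linear_combination (3*ν - 1) * h3
    rw [hν] at h9; norm_num at h9
  have t1 := coeff_gen_symm ν hν (-2+ν) 0 0 (-2-ν) hd1 k j
  rw [zero_mul, neg_zero] at t1
  have t2 := coeff_gen_symm ν hν (1-α) α (α-1) α hα0 k j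
  rw [show -((α-1)*ν) = (1-α)*ν by ring] at t2
  have t3 := coeff_gen_symm ν hν (1-α) (α*ν) ((1-α)*ν) α hα0 k j
  rw [show α*ν*ν = -α by linear_combination α*hν,
      show -((1-α)*ν*ν) = 1-α by linear_combination (α-1)*hν] at t3
  have t4 := coeff_gen_symm ν hν (1-α) (-α) (1-α) α hα0 k j
  rw [show (-α)*ν = -(α*ν) by ring, show -((1-α)*ν) = (α-1)*ν by ring] at t4
  have t5 := coeff_gen_symm ν hν (1-α) (-(α*ν)) ((α-1)*ν) α hα0 k j
  rw [show (-(α*ν))*ν = α by linear_combination (-α)*hν,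
      show -((α-1)*ν*ν) = α-1 by linear_combination (1-α)*hν] at t5
  simp only [U5Series, map_add, mul_add]
  rw [← hα]
  rw [← t1, ← t2, ← t3, ← t4, ← t5]
  ring

/-- The matrix `P = (P_{i,j})` of the `U₅`-operator on `ℚ₅⟨z⟩` in the monomial basis satisfies
`P_{i,j} = 0` unless `i ≡ j (mod 4)`. -/
theorem U5_matrix_entry_vanishes (ν : ℚ_[5]) (hν : ν ^ 2 = -1) (k : ℕ) (hk : 2 ≤ k)
    (i j : ℕ) (hij : ¬ i ≡ j [MOD 4]) :
    PowerSeries.coeff (R := ℚ_[5]) i (PowerSeries.coeff (R := PowerSeries ℚ_[5]) j (U5Series ν k)) = 0 := by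
  have h := congrArg (coeff (R := K) i) (coeff_U5_symm ν hν k j)
  rw [coeff_C_mul, coeff_rescale] at h
  set P := coeff (R := K) i (coeff (R := K⟦X⟧) j (U5Series ν k)) with hP
  by_contra hP0
  have hfac : ν^j * (-ν)^i = 1 := by
    have hz : (ν^j * (-ν)^i - 1) * P = 0 := by linear_combination -h
    rcases mul_eq_zero.mp hz with h'|h'
    · linear_combination h'
    · exact absurd h' hP0
  have hmν : -ν = ν^3 := by linear_combination (-ν)*hν
  have hcomb : ν^(j+3*i) = 1 := by
    rw [pow_add, pow_mul, ← hmν]; exact hfac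
  have hν4 : ν^4 = 1 := by linear_combination (ν^2-1)*hν
  have hred : ν^((j+3*i) % 4) = 1 := by
    have := Nat.div_add_mod (j+3*i) 4
    calc ν^((j+3*i) % 4) = ν^(4*((j+3*i)/4)) * ν^((j+3*i) % 4) := by
          rw [pow_mul, hν4, one_pow, one_mul]
      _ = ν^(4*((j+3*i)/4) + (j+3*i) % 4) := by rw [pow_add]
      _ = ν^(j+3*i) := by rw [this]
      _ = 1 := hcomb
  have hr : (j+3*i) % 4 ≠ 0 := by
    intro h0
    exact hij (show i % 4 = j % 4 by omega)
  have hν1 : ν ≠ 1 := by intro hh; rw [hh] at hν; norm_num at hν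
  have hνm1 : ν ≠ -1 := by intro hh; rw [hh] at hν; norm_num at hν
  rcases (show (j+3*i)%4 = 1 ∨ (j+3*i)%4 = 2 ∨ (j+3*i)%4 = 3 by omega) with hc|hc|hc
  · rw [hc, pow_one] at hred; exact hν1 hred
  · rw [hc, hν] at hred; norm_num at hred
  · rw [hc] at hred
    exact hνm1 (by linear_combination (-1)*hred + ν*hν)
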